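/- The minimum total extent of a feasible assignment for a path pair graph equals the maximum size of a matching in the constraint graph C_G (König duality applies since C_G is bipartite). -/

import Mathlib

open Finset

variable {m : ℕ}

/-- First endpoint of the `e`-th edge of the Hamiltonian path induced by `π`. -/
def pFst (π : Equiv.Perm (Fin (m+1))) (e : Fin m) : Fin (m+1) := π e.castSucc

/-- Second endpoint of the `e`-th edge of the Hamiltonian path induced by `π`. -/
def pSnd (π : Equiv.Perm (Fin (m+1))) (e : Fin m) : Fin (m+1) := π e.succ

/-- Position of vertex `v` along the Hamiltonian path induced by `π`. -/
def pos (π : Equiv.Perm (Fin (m+1))) (v : Fin (m+1)) : ℕ := (π.symm v : ℕ)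

/-- Edges `e` and `f = e+1` of `P_x` form a switch pair: both `P_x`-neighbours of the
middle internal vertex `πx e.succ` lie on the same side of it in `π_y`. -/
def SwitchPairX (πx πy : Equiv.Perm (Fin (m+1))) (e f : Fin m) : Prop :=
  (e : ℕ) + 1 = (f : ℕ) ∧
    ((pos πy (pFst πx e) < pos πy (pSnd πx e) ∧ pos πy (pSnd πx f) < pos πy (pSnd πx e)) ∨
     (pos πy (pSnd πx e) < pos πy (pFst πx e) ∧ pos πy (pSnd πx e) < pos πy (pSnd πx f)))

/-- Switch pairs of `P_y`: the same with the roles of the permutations swapped. -/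
def SwitchPairY (πx πy : Equiv.Perm (Fin (m+1))) (e f : Fin m) : Prop :=
  SwitchPairX πy πx e f

/-- The `P_x`-edge `e` and the `P_y`-edge `f` have the same (unordered) pair of endpoints. -/
def SharedEdge (πx πy : Equiv.Perm (Fin (m+1))) (e f : Fin m) : Prop :=
  (pFst πx e = pFst πy f ∧ pSnd πx e = pSnd πy f) ∨
  (pFst πx e = pSnd πy f ∧ pSnd πx e = pFst πy f)

/-- Alignment of the `P_x`-edge `e`: positive (`True`) iff its endpoints appear in the
same relative order in `π_x` and `π_y`. -/
def AlignX (πx πy : Equiv.Perm (Fin (m+1))) (e : Fin m) : Prop :=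
  pos πy (pFst πx e) < pos πy (pSnd πx e)

/-- Alignment of the `P_y`-edge `e`. -/
def AlignY (πx πy : Equiv.Perm (Fin (m+1))) (e : Fin m) : Prop :=
  pos πx (pFst πy e) < pos πx (pSnd πy e)

/-- The constraint graph `C_G` on the disjoint union `V_X ⊕ V_Y` of the edges of the
two paths: switch pairs inside each part, and a matching edge for each shared edge. -/
def CG (πx πy : Equiv.Perm (Fin (m+1))) : SimpleGraph (Fin m ⊕ Fin m) where
  Adj a b :=
    match a, b with
    | .inl e, .inl f => SwitchPairX πx πy e f ∨ SwitchPairX πx πy f e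
    | .inr e, .inr f => SwitchPairY πx πy e f ∨ SwitchPairY πx πy f e
    | .inl e, .inr f => SharedEdge πx πy e f
    | .inr f, .inl e => SharedEdge πx πy e f
  symm := ⟨by rintro (e|e) (f|f) h <;> simp only at h ⊢ <;> tauto⟩
  loopless := ⟨by
    rintro (e|e) (⟨h, -⟩ | ⟨h, -⟩) <;> omega⟩


/-- Feasibility of nonnegative integer extents `dx` (on `P_x`-edges) and `dy`
(on `P_y`-edges): the three extent constraints. -/
def Feasible (πx πy : Equiv.Perm (Fin (m+1))) (dx dy : Fin m → ℕ) : Prop :=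
  (∀ e f : Fin m, SwitchPairX πx πy e f → 1 ≤ dx e + dx f) ∧
  (∀ e f : Fin m, SwitchPairY πx πy e f → 1 ≤ dy e + dy f) ∧
  (∀ e f : Fin m, SharedEdge πx πy e f → 1 ≤ dx e + dy f)

/-- The coordinate of vertex `v` obtained by prefix-summing the extents `d`
along the path induced by `π`, starting from `0`. -/
def coord (π : Equiv.Perm (Fin (m+1))) (d : Fin m → ℕ) (v : Fin (m+1)) : ℕ :=
  ∑ i ∈ Finset.univ.filter (fun i : Fin m => (i : ℕ) < pos π v), d i

/-- The total extent of an assignment. -/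
def totalExtent (dx dy : Fin m → ℕ) : ℕ := (∑ e, dx e) + ∑ f, dy f

section Generic

open SimpleGraph Finset

variable {V : Type*} [Fintype V] [DecidableEq V] {G : SimpleGraph V}

lemma matching_le_weight {M : G.Subgraph} (hM : M.IsMatching) (w : V → ℕ)
    (hw : ∀ a b, G.Adj a b → 1 ≤ w a + w b) : M.edgeSet.ncard ≤ ∑ v, w v := by
  classical
  have hpick : ∀ e : M.edgeSet, ∃ v, v ∈ (e : Sym2 V) ∧ 1 ≤ w v := by
    rintro ⟨e, he⟩
    induction e using Sym2.ind with
    | _ a b =>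
      rw [SimpleGraph.Subgraph.mem_edgeSet] at he
      have h1 := hw a b (M.adj_sub he)
      have : 1 ≤ w a ∨ 1 ≤ w b := by omega
      rcases this with h | h
      · exact ⟨a, by simp, h⟩
      · exact ⟨b, by simp, h⟩
  have huniq : ∀ (v : V) (e₁ e₂ : Sym2 V), e₁ ∈ M.edgeSet → e₂ ∈ M.edgeSet →
      v ∈ e₁ → v ∈ e₂ → e₁ = e₂ := by
    intro v e₁ e₂ h1 h2 hv1 hv2
    rw [← Sym2.other_spec hv1] at h1 ⊢
    rw [← Sym2.other_spec hv2] at h2 ⊢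
    rw [SimpleGraph.Subgraph.mem_edgeSet] at h1 h2
    obtain ⟨u, -, hu⟩ := hM (M.edge_vert h1)
    rw [hu _ h1, hu _ h2]
  let c : M.edgeSet → {v : V // 1 ≤ w v} := fun e =>
    ⟨(hpick e).choose, (hpick e).choose_spec.2⟩
  have hcinj : Function.Injective c := by
    intro e₁ e₂ h
    have h1 := (hpick e₁).choose_spec.1
    have h2 := (hpick e₂).choose_spec.1
    have : (hpick e₁).choose = (hpick e₂).choose := congrArg Subtype.val h
    rw [this] at h1
    exact Subtype.ext (huniq _ _ _ e₁.2 e₂.2 h1 h2)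
  have h1 : M.edgeSet.ncard = Nat.card M.edgeSet := (Nat.card_coe_set_eq _).symm
  have h2 : Nat.card M.edgeSet ≤ Nat.card {v : V // 1 ≤ w v} :=
    Nat.card_le_card_of_injective c hcinj
  have h3 : Nat.card {v : V // 1 ≤ w v} = (univ.filter (fun v => 1 ≤ w v)).card := by
    rw [Nat.card_eq_fintype_card, Fintype.card_subtype]
  have h4 : (univ.filter (fun v => 1 ≤ w v)).card ≤ ∑ v, w v := by
    calc (univ.filter (fun v => 1 ≤ w v)).card
        = ∑ v ∈ univ.filter (fun v => 1 ≤ w v), 1 := by simp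
      _ ≤ ∑ v ∈ univ.filter (fun v => 1 ≤ w v), w v :=
          Finset.sum_le_sum (fun v hv => (Finset.mem_filter.mp hv).2)
      _ ≤ ∑ v, w v := Finset.sum_le_sum_of_subset (Finset.filter_subset _ _)
  omega

lemma matching_of_pairs (P : Finset (V × V)) (hadj : ∀ p ∈ P, G.Adj p.1 p.2)
    (hdisj : ∀ p ∈ P, ∀ q ∈ P, p ≠ q →
      p.1 ≠ q.1 ∧ p.1 ≠ q.2 ∧ p.2 ≠ q.1 ∧ p.2 ≠ q.2) :
    ∃ M : G.Subgraph, M.IsMatching ∧ M.edgeSet.ncard = P.card := by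
  classical
  refine ⟨{ verts := {v | ∃ p ∈ P, v = p.1 ∨ v = p.2},
            Adj := fun v w => (v, w) ∈ P ∨ (w, v) ∈ P,
            adj_sub := ?_, edge_vert := ?_, symm := ?_ }, ?_, ?_⟩
  · rintro v w (h | h)
    · exact hadj _ h
    · exact (hadj _ h).symm
  · rintro v w (h | h)
    · exact ⟨_, h, Or.inl rfl⟩
    · exact ⟨_, h, Or.inr rfl⟩
  · constructor; rintro v w (h | h)
    · exact Or.inr h
    · exact Or.inl h
  · rintro v ⟨p, hp, hv⟩
    have hne : p.1 ≠ p.2 := (hadj p hp).ne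
    have hpP : (p.1, p.2) ∈ P := by rwa [Prod.mk.eta]
    rcases hv with rfl | rfl
    · refine ⟨p.2, Or.inl hpP, ?_⟩
      rintro y (hy | hy)
      · by_cases h : (p.1, y) = p
        · exact (Prod.ext_iff.mp h).2
        · exact absurd rfl ((hdisj _ hy _ hp h).1)
      · by_cases h : (y, p.1) = p
        · exact absurd (Prod.ext_iff.mp h).2 hne
        · exact absurd rfl ((hdisj _ hy _ hp h).2.2.1)
    · refine ⟨p.1, Or.inr hpP, ?_⟩
      rintro y (hy | hy)
      · by_cases h : (p.2, y) = p
        · exact absurd (Prod.ext_iff.mp h).1 hne.symm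
        · exact absurd rfl ((hdisj _ hy _ hp h).2.1)
      · by_cases h : (y, p.2) = p
        · exact (Prod.ext_iff.mp h).1
        · exact absurd rfl ((hdisj _ hy _ hp h).2.2.2)
  · have hE : SimpleGraph.Subgraph.edgeSet
        { verts := {v | ∃ p ∈ P, v = p.1 ∨ v = p.2},
          Adj := fun v w => (v, w) ∈ P ∨ (w, v) ∈ P,
          adj_sub := by
            rintro v w (h | h)
            · exact hadj _ h
            · exact (hadj _ h).symm,
          edge_vert := by
            rintro v w (h | h)
            · exact ⟨_, h, Or.inl rfl⟩
            · exact ⟨_, h, Or.inr rfl⟩,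
          symm := by
            constructor; rintro v w (h | h)
            · exact Or.inr h
            · exact Or.inl h } = (fun p : V × V => s(p.1, p.2)) '' ↑P := by
      ext e
      induction e using Sym2.ind with
      | _ a b =>
        rw [SimpleGraph.Subgraph.mem_edgeSet]
        constructor
        · rintro (h | h)
          · exact ⟨_, h, rfl⟩
          · exact ⟨_, h, Sym2.eq_swap⟩
        · rintro ⟨p, hp, he⟩
          rw [Sym2.eq_iff] at he
          rcases he with ⟨h1, h2⟩ | ⟨h1, h2⟩
          · left; rwa [← h1, ← h2, Prod.mk.eta]
          · right; rwa [← h1, ← h2, Prod.mk.eta]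
    rw [hE, Set.ncard_image_of_injOn, Set.ncard_coe_finset]
    intro p hp q hq h
    simp only [Sym2.eq_iff] at h
    rcases h with ⟨h1, h2⟩ | ⟨h1, h2⟩
    · exact Prod.ext h1 h2
    · by_contra hpq
      exact (hdisj p (by exact_mod_cast hp) q (by exact_mod_cast hq) hpq).2.1 h1

lemma hall_side (col : V → Bool) (hcol : ∀ a b, G.Adj a b → col a ≠ col b)
    (C : Finset V) (hC : ∀ a b, G.Adj a b → a ∈ C ∨ b ∈ C)
    (hmin : ∀ C' : Finset V, (∀ a b, G.Adj a b → a ∈ C' ∨ b ∈ C') → C.card ≤ C'.card)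
    (bside : Bool) :
    ∃ f : {x // x ∈ C.filter (fun v => col v = bside)} → V,
      Function.Injective f ∧ ∀ x, G.Adj x.val (f x) ∧ f x ∉ C := by
  classical
  set D := C.filter (fun v => col v = bside) with hD
  set t : {x // x ∈ D} → Finset V :=
    fun x => univ.filter (fun b => G.Adj x.val b ∧ b ∉ C) with ht
  have hall : ∀ s : Finset {x // x ∈ D}, s.card ≤ (s.biUnion t).card := by
    intro s
    by_contra hlt
    push_neg at hlt
    set C' := (C \ s.image (Subtype.val)) ∪ s.biUnion t with hC'
    have himsub : s.image (Subtype.val) ⊆ C := by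
      intro a ha
      obtain ⟨x, hx, rfl⟩ := Finset.mem_image.mp ha
      exact (Finset.mem_filter.mp x.2).1
    have hcov : ∀ a b, G.Adj a b → a ∈ C' ∨ b ∈ C' := by
      have key : ∀ a b, G.Adj a b → a ∈ C → a ∈ C' ∨ b ∈ C' := by
        intro a b hab haC
        by_cases him : a ∈ s.image (Subtype.val)
        · obtain ⟨x, hx, rfl⟩ := Finset.mem_image.mp him
          have hcola : col (x : V) = bside := (Finset.mem_filter.mp x.2).2
          by_cases hbC : b ∈ C
          · right
            refine Finset.mem_union.mpr (Or.inl (Finset.mem_sdiff.mpr ⟨hbC, ?_⟩))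
            intro hbim
            obtain ⟨y, hy, hyb⟩ := Finset.mem_image.mp hbim
            have hcolb : col b = bside := hyb ▸ (Finset.mem_filter.mp y.2).2
            exact hcol _ _ hab (hcola.trans hcolb.symm)
          · right
            refine Finset.mem_union.mpr (Or.inr (Finset.mem_biUnion.mpr ⟨x, hx, ?_⟩))
            simp only [ht, Finset.mem_filter, Finset.mem_univ, true_and]
            exact ⟨hab, hbC⟩
        · left
          exact Finset.mem_union.mpr (Or.inl (Finset.mem_sdiff.mpr ⟨haC, him⟩))
      intro a b hab
      rcases hC a b hab with h | h
      · exact key a b hab h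
      · rcases key b a hab.symm h with h' | h'
        · exact Or.inr h'
        · exact Or.inl h'
    have h1 : C'.card ≤ (C \ s.image (Subtype.val)).card + (s.biUnion t).card :=
      Finset.card_union_le _ _
    have h2 : (C \ s.image (Subtype.val)).card = C.card - s.card := by
      rw [Finset.card_sdiff_of_subset himsub, Finset.card_image_of_injective _ Subtype.coe_injective]
    have h3 : s.card ≤ C.card := by
      rw [← Finset.card_image_of_injective s Subtype.coe_injective]
      exact Finset.card_le_card himsub
    have := hmin C' hcov
    omega
  obtain ⟨f, hfi, hft⟩ := (Finset.all_card_le_biUnion_card_iff_exists_injective t).mp hall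
  refine ⟨f, hfi, fun x => ?_⟩
  have := hft x
  simp only [ht, Finset.mem_filter, Finset.mem_univ, true_and] at this
  exact this

lemma konig (col : V → Bool) (hcol : ∀ a b, G.Adj a b → col a ≠ col b) :
    ∃ (C : Finset V) (M : G.Subgraph), (∀ a b, G.Adj a b → a ∈ C ∨ b ∈ C) ∧
      M.IsMatching ∧ M.edgeSet.ncard = C.card := by
  classical
  have h0 : Fintype.card V ∈
      {n | ∃ C : Finset V, (∀ a b, G.Adj a b → a ∈ C ∨ b ∈ C) ∧ C.card = n} :=
    ⟨univ, fun a b _ => Or.inl (Finset.mem_univ a), Finset.card_univ⟩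
  obtain ⟨C, hC, hCcard⟩ := Nat.sInf_mem (Set.nonempty_of_mem h0)
  have hmin : ∀ C' : Finset V, (∀ a b, G.Adj a b → a ∈ C' ∨ b ∈ C') →
      C.card ≤ C'.card := fun C' h => hCcard ▸ Nat.sInf_le ⟨C', h, rfl⟩
  set CA := C.filter (fun v => col v = true) with hCA
  set CB := C.filter (fun v => col v = false) with hCB
  obtain ⟨f, hfi, hf⟩ := hall_side col hcol C hC hmin true
  obtain ⟨g, hgi, hg⟩ := hall_side col hcol C hC hmin false
  have hfC : ∀ x : {x // x ∈ CA}, f x ∉ C := fun x => (hf x).2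
  have hgC : ∀ y : {y // y ∈ CB}, g y ∉ C := fun y => (hg y).2
  have hcolA : ∀ x : {x // x ∈ CA}, col x.val = true :=
    fun x => (Finset.mem_filter.mp x.2).2
  have hcolB : ∀ y : {y // y ∈ CB}, col y.val = false :=
    fun y => (Finset.mem_filter.mp y.2).2
  have hAC : ∀ x : {x // x ∈ CA}, x.val ∈ C := fun x => (Finset.mem_filter.mp x.2).1
  have hBC : ∀ y : {y // y ∈ CB}, y.val ∈ C := fun y => (Finset.mem_filter.mp y.2).1
  have hcolf : ∀ x : {x // x ∈ CA}, col (f x) = false := by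
    intro x
    have := hcol _ _ (hf x).1
    rw [hcolA x] at this
    simpa using (Ne.symm this)
  have hcolg : ∀ y : {y // y ∈ CB}, col (g y) = true := by
    intro y
    have := hcol _ _ (hg y).1
    rw [hcolB y] at this
    simpa using (Ne.symm this)
  set P : Finset (V × V) :=
    ((univ : Finset {x // x ∈ CA}).image (fun x => (x.val, f x))) ∪
    ((univ : Finset {y // y ∈ CB}).image (fun y => (y.val, g y))) with hP
  have hmem : ∀ p ∈ P, (∃ x : {x // x ∈ CA}, p = (x.val, f x)) ∨
      (∃ y : {y // y ∈ CB}, p = (y.val, g y)) := by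
    intro p hp
    rcases Finset.mem_union.mp hp with h | h
    · obtain ⟨x, -, rfl⟩ := Finset.mem_image.mp h
      exact Or.inl ⟨x, rfl⟩
    · obtain ⟨y, -, rfl⟩ := Finset.mem_image.mp h
      exact Or.inr ⟨y, rfl⟩
  have hadj : ∀ p ∈ P, G.Adj p.1 p.2 := by
    intro p hp
    rcases hmem p hp with ⟨x, rfl⟩ | ⟨y, rfl⟩
    · exact (hf x).1
    · exact (hg y).1
  have hdisj : ∀ p ∈ P, ∀ q ∈ P, p ≠ q →
      p.1 ≠ q.1 ∧ p.1 ≠ q.2 ∧ p.2 ≠ q.1 ∧ p.2 ≠ q.2 := by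
    intro p hp q hq hne
    rcases hmem p hp with ⟨x, rfl⟩ | ⟨y, rfl⟩ <;>
      rcases hmem q hq with ⟨x', rfl⟩ | ⟨y', rfl⟩ <;> dsimp only
    · have hxx : x ≠ x' := fun h => hne (by rw [h])
      refine ⟨fun h => hxx (Subtype.coe_injective h), ?_, ?_, fun h => hxx (hfi h)⟩
      · exact fun h => hfC x' (h ▸ hAC x)
      · exact fun h => hfC x (h.symm ▸ hAC x')
    · refine ⟨?_, ?_, ?_, ?_⟩
      · intro h
        have h2 := hcolB y'
        rw [← h, hcolA x] at h2
        simp at h2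
      · exact fun h => hgC y' (h ▸ hAC x)
      · exact fun h => hfC x (h.symm ▸ hBC y')
      · intro h
        have h2 := hcolg y'
        rw [← h, hcolf x] at h2
        simp at h2
    · refine ⟨?_, ?_, ?_, ?_⟩
      · intro h
        have h2 := hcolA x'
        rw [← h, hcolB y] at h2
        simp at h2
      · exact fun h => hfC x' (h.symm ▸ hBC y)
      · exact fun h => hgC y (h.symm ▸ hAC x')
      · intro h
        have h2 := hcolf x'
        rw [← h, hcolg y] at h2
        simp at h2
    · have hyy : y ≠ y' := fun h => hne (by rw [h])
      refine ⟨fun h => hyy (Subtype.coe_injective h), ?_, ?_, fun h => hyy (hgi h)⟩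
      · exact fun h => hgC y' (h ▸ hBC y)
      · exact fun h => hgC y (h.symm ▸ hBC y')
  obtain ⟨M, hM, hMcard⟩ := matching_of_pairs P hadj hdisj
  refine ⟨C, M, hC, hM, ?_⟩
  rw [hMcard]
  have hdis : Disjoint ((univ : Finset {x // x ∈ CA}).image (fun x => (x.val, f x)))
      ((univ : Finset {y // y ∈ CB}).image (fun y => (y.val, g y))) := by
    rw [Finset.disjoint_left]
    rintro p hp1 hp2
    obtain ⟨x, -, rfl⟩ := Finset.mem_image.mp hp1
    obtain ⟨y, -, hpe⟩ := Finset.mem_image.mp hp2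
    have h1 : y.val = x.val := (Prod.ext_iff.mp hpe).1
    exact absurd ((hcolA x).symm.trans (h1 ▸ hcolB y)) (by simp)
  have hc1 : ((univ : Finset {x // x ∈ CA}).image (fun x => (x.val, f x))).card
      = CA.card := by
    rw [Finset.card_image_of_injective _ (fun a b h => Subtype.coe_injective
      (Prod.ext_iff.mp h).1), Finset.card_univ, Fintype.card_coe]
  have hc2 : ((univ : Finset {y // y ∈ CB}).image (fun y => (y.val, g y))).card
      = CB.card := by
    rw [Finset.card_image_of_injective _ (fun a b h => Subtype.coe_injective
      (Prod.ext_iff.mp h).1), Finset.card_univ, Fintype.card_coe]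
  rw [hP, Finset.card_union_of_disjoint hdis, hc1, hc2, hCA, hCB]
  have hfe : C.filter (fun v => col v = false) = C.filter (fun v => ¬ col v = true) := by
    ext v
    simp [Bool.not_eq_true]
  rw [hfe]
  exact Finset.card_filter_add_card_filter_not (p := fun v => col v = true)

end Generic

section Specific

open SimpleGraph Finset

lemma decide_ne_decide' {P Q : Prop} [Decidable P] [Decidable Q] (h : P ↔ ¬ Q) :
    decide P ≠ decide Q := by
  by_cases hp : P <;> by_cases hq : Q <;> simp_all

lemma not_decide_ne_not_decide {P Q : Prop} [Decidable P] [Decidable Q] (h : P ↔ ¬ Q) :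
    (!decide P) ≠ (!decide Q) := by
  by_cases hp : P <;> by_cases hq : Q <;> simp_all

lemma decide_ne_not_decide {P Q : Prop} [Decidable P] [Decidable Q] (h : P ↔ Q) :
    decide P ≠ !decide Q := by
  by_cases hp : P <;> by_cases hq : Q <;> simp_all

variable {m : ℕ}

instance {m : ℕ} (πx πy : Equiv.Perm (Fin (m+1))) (e : Fin m) : Decidable (AlignX πx πy e) :=
  Nat.decLt _ _

instance {m : ℕ} (πx πy : Equiv.Perm (Fin (m+1))) (e : Fin m) : Decidable (AlignY πx πy e) :=
  Nat.decLt _ _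

lemma pos_pFst (π : Equiv.Perm (Fin (m+1))) (e : Fin m) : pos π (pFst π e) = (e : ℕ) := by
  simp [pos, pFst]

lemma pos_pSnd (π : Equiv.Perm (Fin (m+1))) (e : Fin m) : pos π (pSnd π e) = (e : ℕ) + 1 := by
  simp [pos, pSnd]

lemma pFst_of_consec (πx : Equiv.Perm (Fin (m+1))) {e f : Fin m} (h : (e : ℕ) + 1 = f) :
    pFst πx f = pSnd πx e := by
  unfold pFst pSnd
  congr 1
  apply Fin.ext
  simp [← h]

lemma switch_align (πx πy : Equiv.Perm (Fin (m+1))) {e f : Fin m}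
    (h : SwitchPairX πx πy e f) : (AlignX πx πy e ↔ ¬ AlignX πx πy f) := by
  obtain ⟨h1, h2⟩ := h
  have hff : pFst πx f = pSnd πx e := pFst_of_consec πx h1
  unfold AlignX
  rw [hff]
  rcases h2 with ⟨ha, hb⟩ | ⟨ha, hb⟩ <;> omega

lemma shared_align (πx πy : Equiv.Perm (Fin (m+1))) {e f : Fin m}
    (h : SharedEdge πx πy e f) : (AlignX πx πy e ↔ AlignY πx πy f) := by
  rcases h with ⟨h1, h2⟩ | ⟨h1, h2⟩
  · have a1 : pos πy (pFst πx e) = (f : ℕ) := by rw [h1, pos_pFst]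
    have a2 : pos πy (pSnd πx e) = (f : ℕ) + 1 := by rw [h2, pos_pSnd]
    have a3 : pos πx (pFst πy f) = (e : ℕ) := by rw [← h1, pos_pFst]
    have a4 : pos πx (pSnd πy f) = (e : ℕ) + 1 := by rw [← h2, pos_pSnd]
    unfold AlignX AlignY
    rw [a1, a2, a3, a4]
    omega
  · have a1 : pos πy (pFst πx e) = (f : ℕ) + 1 := by rw [h1, pos_pSnd]
    have a2 : pos πy (pSnd πx e) = (f : ℕ) := by rw [h2, pos_pFst]
    have a3 : pos πx (pFst πy f) = (e : ℕ) + 1 := by rw [← h2, pos_pSnd]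
    have a4 : pos πx (pSnd πy f) = (e : ℕ) := by rw [← h1, pos_pFst]
    unfold AlignX AlignY
    rw [a1, a2, a3, a4]
    omega

/-- The bipartition colouring of the constraint graph. -/
def cgCol (πx πy : Equiv.Perm (Fin (m+1))) : Fin m ⊕ Fin m → Bool :=
  Sum.elim (fun e => decide (pos πy (pFst πx e) < pos πy (pSnd πx e)))
           (fun f => !decide (pos πx (pFst πy f) < pos πx (pSnd πy f)))

lemma cg_adj_col (πx πy : Equiv.Perm (Fin (m+1))) :
    ∀ a b, (CG πx πy).Adj a b → cgCol πx πy a ≠ cgCol πx πy b := by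
  rintro (e | e) (f | f) hadj
  · have h : SwitchPairX πx πy e f ∨ SwitchPairX πx πy f e := hadj
    have hiff : AlignX πx πy e ↔ ¬ AlignX πx πy f := by
      rcases h with h | h
      · exact switch_align πx πy h
      · have := switch_align πx πy h
        tauto
    simp only [cgCol, Sum.elim_inl]
    exact decide_ne_decide' hiff
  · have h : SharedEdge πx πy e f := hadj
    have hiff : AlignX πx πy e ↔ AlignY πx πy f := shared_align πx πy h
    simp only [cgCol, Sum.elim_inl, Sum.elim_inr]
    exact decide_ne_not_decide hiff
  · have h : SharedEdge πx πy f e := hadj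
    have hiff : AlignX πx πy f ↔ AlignY πx πy e := shared_align πx πy h
    simp only [cgCol, Sum.elim_inl, Sum.elim_inr]
    exact (decide_ne_not_decide hiff).symm
  · have h : SwitchPairY πx πy e f ∨ SwitchPairY πx πy f e := hadj
    have hiff : AlignX πy πx e ↔ ¬ AlignX πy πx f := by
      rcases h with h | h
      · exact switch_align πy πx h
      · have := switch_align πy πx h
        tauto
    simp only [cgCol, Sum.elim_inr]
    show (!decide (AlignX πy πx e)) ≠ (!decide (AlignX πy πx f))
    exact not_decide_ne_not_decide hiff

lemma feasible_of_cover (πx πy : Equiv.Perm (Fin (m+1))) (C : Finset (Fin m ⊕ Fin m))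
    (hC : ∀ a b, (CG πx πy).Adj a b → a ∈ C ∨ b ∈ C) :
    Feasible πx πy (fun e => if Sum.inl e ∈ C then 1 else 0)
      (fun f => if Sum.inr f ∈ C then 1 else 0) := by
  refine ⟨?_, ?_, ?_⟩
  · intro e f h
    have hadj : (CG πx πy).Adj (Sum.inl e) (Sum.inl f) := Or.inl h
    rcases hC _ _ hadj with h' | h' <;> simp [h']
  · intro e f h
    have hadj : (CG πx πy).Adj (Sum.inr e) (Sum.inr f) := Or.inl h
    rcases hC _ _ hadj with h' | h' <;> simp [h']
  · intro e f h
    have hadj : (CG πx πy).Adj (Sum.inl e) (Sum.inr f) := h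
    rcases hC _ _ hadj with h' | h' <;> simp [h']

lemma total_indicator (C : Finset (Fin m ⊕ Fin m)) :
    totalExtent (fun e => if Sum.inl e ∈ C then 1 else 0)
      (fun f => if Sum.inr f ∈ C then 1 else 0) = C.card := by
  classical
  unfold totalExtent
  have h1 : ∑ e : Fin m, (if Sum.inl e ∈ C then 1 else 0)
      = (univ.filter (fun e : Fin m => Sum.inl e ∈ C)).card := by
    simp [Finset.sum_boole]
  have h2 : ∑ f : Fin m, (if Sum.inr f ∈ C then 1 else 0)
      = (univ.filter (fun f : Fin m => Sum.inr f ∈ C)).card := by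
    simp [Finset.sum_boole]
  rw [h1, h2]
  have e1 : (univ.filter (fun e : Fin m => Sum.inl e ∈ C)).card
      = (C.filter (fun v => v.isLeft = true)).card := by
    rw [← Finset.card_image_of_injective _ (Sum.inl_injective : Function.Injective (Sum.inl : Fin m → Fin m ⊕ Fin m))]
    congr 1
    ext v
    cases v <;> simp
  have e2 : (univ.filter (fun f : Fin m => Sum.inr f ∈ C)).card
      = (C.filter (fun v => ¬ v.isLeft = true)).card := by
    rw [← Finset.card_image_of_injective _ (Sum.inr_injective : Function.Injective (Sum.inr : Fin m → Fin m ⊕ Fin m))]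
    congr 1
    ext v
    cases v <;> simp
  rw [e1, e2, Finset.card_filter_add_card_filter_not]

lemma feasible_weight (πx πy : Equiv.Perm (Fin (m+1))) {dx dy : Fin m → ℕ}
    (hF : Feasible πx πy dx dy) :
    ∀ a b, (CG πx πy).Adj a b → 1 ≤ Sum.elim dx dy a + Sum.elim dx dy b := by
  rintro (e | e) (f | f) h
  · have h' : SwitchPairX πx πy e f ∨ SwitchPairX πx πy f e := h
    simp only [Sum.elim_inl]
    rcases h' with h' | h'
    · exact hF.1 e f h'
    · have := hF.1 f e h'
      omega
  · have h' : SharedEdge πx πy e f := h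
    simpa using hF.2.2 e f h'
  · have h' : SharedEdge πx πy f e := h
    have := hF.2.2 f e h'
    simp only [Sum.elim_inl, Sum.elim_inr]
    omega
  · have h' : SwitchPairY πx πy e f ∨ SwitchPairY πx πy f e := h
    simp only [Sum.elim_inr]
    rcases h' with h' | h'
    · exact hF.2.1 e f h'
    · have := hF.2.1 f e h'
      omega

lemma sum_elim_total (dx dy : Fin m → ℕ) :
    ∑ v : Fin m ⊕ Fin m, Sum.elim dx dy v = totalExtent dx dy := by
  rw [Fintype.sum_sum_type]
  simp [totalExtent]

end Specific

/-- the minimum total extent of a feasible assignment equals the maximum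
size of a matching in the constraint graph `C_G` (König duality, `C_G` bipartite). -/
theorem minExtent_eq_maxMatching {m : ℕ} (πx πy : Equiv.Perm (Fin (m+1))) :
    sInf {t | ∃ dx dy : Fin m → ℕ, Feasible πx πy dx dy ∧ totalExtent dx dy = t} =
      sSup {k | ∃ M : (CG πx πy).Subgraph, M.IsMatching ∧ M.edgeSet.ncard = k} := by
  classical
  set S₁ := {t | ∃ dx dy : Fin m → ℕ, Feasible πx πy dx dy ∧ totalExtent dx dy = t} with hS₁
  set S₂ := {k | ∃ M : (CG πx πy).Subgraph, M.IsMatching ∧ M.edgeSet.ncard = k} with hS₂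
  have h0 : (0 : ℕ) ∈ S₂ := by
    refine ⟨⊥, ?_, ?_⟩
    · intro v hv
      simp [SimpleGraph.Subgraph.verts_bot] at hv
    · simp [SimpleGraph.Subgraph.edgeSet_bot]
  have hbdd : BddAbove S₂ := by
    refine ⟨Fintype.card (Fin m ⊕ Fin m), ?_⟩
    rintro k ⟨M, hM, rfl⟩
    have := matching_le_weight hM (fun _ => 1) (fun a b _ => by simp)
    simpa using this
  obtain ⟨Mmax, hMmax, hMmaxcard⟩ := Nat.sSup_mem ⟨0, h0⟩ hbdd
  obtain ⟨C, M, hCcov, hM, hMC⟩ := konig (G := CG πx πy) (cgCol πx πy) (cg_adj_col πx πy)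
  have hCle : C.card ≤ sSup S₂ := le_csSup hbdd ⟨M, hM, hMC⟩
  have hlb : ∀ t ∈ S₁, sSup S₂ ≤ t := by
    rintro t ⟨dx, dy, hF, rfl⟩
    have hw := matching_le_weight hMmax (Sum.elim dx dy) (feasible_weight πx πy hF)
    rw [sum_elim_total] at hw
    omega
  have hmem : C.card ∈ S₁ :=
    ⟨_, _, feasible_of_cover πx πy C hCcov, total_indicator C⟩
  have h1 : sInf S₁ ≤ C.card := Nat.sInf_le hmem
  have h2 : sSup S₂ ≤ sInf S₁ := hlb _ (Nat.sInf_mem ⟨_, hmem⟩)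
  omega
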